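/- arXiv:2301.04424 — 3 statements merged into one kernel-verified Lean document; each statement's English description precedes it below -/
import Mathlib

section
/- Let U ⊆ ℂ be open, let A ∈ ℂ, let B > 0 and C be real numbers, let N ≥ 1, and for j = 1,…,N let K_j ∈ ℝ and α_j, β_j ∈ ℂ be such that α_j z + β_j ≠ 0 for all z ∈ U. Then the function φ(z) = (C/B)·log(|z − A|² + B) + Σ_{j=1}^{N} K_j · log(|α_j z + β_j|²) is twice continuously differentiable on U and satisfies (1/4)Δφ(z) = C/(|z − A|² + B)² for every z ∈ U; i.e., φ is a Kähler potential on U for the metric F(z) = C/(|z − A|² + B)². -/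
open Complex

/-- The Laplacian of a function `f : ℂ → ℝ`, identifying `ℂ` with `ℝ²` via `z = x + iy`:
`Δf = ∂²f/∂x² + ∂²f/∂y²`. -/
noncomputable def planeLaplacian (f : ℂ → ℝ) (z : ℂ) : ℝ :=
  fderiv ℝ (fun w => fderiv ℝ f w 1) z 1 +
    fderiv ℝ (fun w => fderiv ℝ f w Complex.I) z Complex.I

open Topology

/-- Auxiliary predicate: `f` has second-order derivative data at `z` witnessing that
its plane Laplacian equals `v`. -/
def HasPlaneLapAt (f : ℂ → ℝ) (v : ℝ) (z : ℂ) : Prop :=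
  ∃ f' : ℂ → (ℂ →L[ℝ] ℝ), (∀ᶠ w in 𝓝 z, HasFDerivAt f (f' w) w) ∧
    ∃ L1 L2 : ℂ →L[ℝ] ℝ, HasFDerivAt (fun w => f' w 1) L1 z ∧
      HasFDerivAt (fun w => f' w Complex.I) L2 z ∧ L1 1 + L2 Complex.I = v

theorem HasPlaneLapAt.lap_eq {f : ℂ → ℝ} {v : ℝ} {z : ℂ}
    (h : HasPlaneLapAt f v z) : planeLaplacian f z = v := by
  obtain ⟨f', hf', L1, L2, h1, h2, hv⟩ := h
  have e1 : (fun w => fderiv ℝ f w 1) =ᶠ[𝓝 z] fun w => f' w 1 :=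
    hf'.mono fun w hw => by simp only [hw.fderiv]
  have e2 : (fun w => fderiv ℝ f w Complex.I) =ᶠ[𝓝 z] fun w => f' w Complex.I :=
    hf'.mono fun w hw => by simp only [hw.fderiv]
  unfold planeLaplacian
  rw [e1.fderiv_eq, e2.fderiv_eq, h1.fderiv, h2.fderiv, hv]

theorem HasPlaneLapAt.add {f g : ℂ → ℝ} {v w : ℝ} {z : ℂ}
    (hf : HasPlaneLapAt f v z) (hg : HasPlaneLapAt g w z) :
    HasPlaneLapAt (fun x => f x + g x) (v + w) z := by
  obtain ⟨f', hf', L1, L2, h1, h2, hv⟩ := hf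
  obtain ⟨g', hg', M1, M2, k1, k2, hw⟩ := hg
  refine ⟨fun x => f' x + g' x, ?_, L1 + M1, L2 + M2, ?_, ?_, ?_⟩
  · filter_upwards [hf', hg'] with x h1 h2 using h1.add h2
  · exact h1.add k1
  · exact h2.add k2
  · simp [← hv, ← hw]; ring

theorem HasPlaneLapAt.const_mul {f : ℂ → ℝ} {v : ℝ} {z : ℂ} (c : ℝ)
    (hf : HasPlaneLapAt f v z) : HasPlaneLapAt (fun x => c * f x) (c * v) z := by
  obtain ⟨f', hf', L1, L2, h1, h2, hv⟩ := hf
  refine ⟨fun x => c • f' x, ?_, c • L1, c • L2, ?_, ?_, ?_⟩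
  · filter_upwards [hf'] with x h using h.const_mul c
  · simpa [mul_comm] using h1.const_mul c
  · simpa [mul_comm] using h2.const_mul c
  · simp [← hv]; ring

theorem hasPlaneLapAt_zero {z : ℂ} : HasPlaneLapAt (fun _ => (0 : ℝ)) 0 z :=
  ⟨fun _ => 0, Filter.Eventually.of_forall fun w => hasFDerivAt_const 0 w,
    0, 0, by simpa using hasFDerivAt_const (0 : ℝ) z,
    by simpa using hasFDerivAt_const (0 : ℝ) z, by simp⟩

theorem HasPlaneLapAt.sum {ι : Type*} {s : Finset ι} {f : ι → ℂ → ℝ} {v : ι → ℝ} {z : ℂ}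
    (h : ∀ i ∈ s, HasPlaneLapAt (f i) (v i) z) :
    HasPlaneLapAt (fun x => ∑ i ∈ s, f i x) (∑ i ∈ s, v i) z := by
  classical
  induction s using Finset.induction with
  | empty => simpa using hasPlaneLapAt_zero
  | insert a s hni ih =>
    simp only [Finset.sum_insert hni]
    exact (h a (Finset.mem_insert_self a s)).add
      (ih fun i hi => h i (Finset.mem_insert_of_mem hi))

/-- Smoothness of `log (|az+b|² + c)` where the argument is nonzero. -/
theorem contDiffAt_log_term (a b : ℂ) (c : ℝ) (z : ℂ)
    (h : Complex.normSq (a * z + b) + c ≠ 0) :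
    ContDiffAt ℝ 2 (fun w => Real.log (Complex.normSq (a * w + b) + c)) z := by
  have hns : ContDiff ℝ 2 Complex.normSq := by
    have : Complex.normSq = fun z : ℂ => z.re * z.re + z.im * z.im :=
      funext Complex.normSq_apply
    rw [this]
    exact (Complex.reCLM.contDiff.mul Complex.reCLM.contDiff).add
      (Complex.imCLM.contDiff.mul Complex.imCLM.contDiff)
  have hu : ContDiff ℝ 2 (fun w => Complex.normSq (a * w + b) + c) :=
    (hns.comp ((contDiff_const.mul contDiff_id).add contDiff_const)).add contDiff_const
  exact (Real.contDiffAt_log.2 h).comp z hu.contDiffAt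

set_option maxHeartbeats 1000000 in
/-- Key computation: the plane Laplacian of `log (|az+b|² + c)`. -/
theorem key_hasPlaneLapAt (a b : ℂ) (c : ℝ) (z : ℂ)
    (hz : 0 < Complex.normSq (a * z + b) + c) :
    HasPlaneLapAt (fun w => Real.log (Complex.normSq (a * w + b) + c))
      (4 * Complex.normSq a * c / (Complex.normSq (a * z + b) + c) ^ 2) z := by
  set u : ℂ → ℝ := fun w => Complex.normSq (a * w + b) + c with hu_def
  set R : ℂ → ℝ := fun w => (a * w + b).re with hR_def
  set S : ℂ → ℝ := fun w => (a * w + b).im with hS_def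
  have huRS : ∀ w, u w = R w * R w + S w * S w + c := fun w => by
    simp [hu_def, hR_def, hS_def, Complex.normSq_apply]
  -- derivative of w ↦ a*w+b
  have hlin : ∀ w : ℂ, HasFDerivAt (fun w => a * w + b)
      ((ContinuousLinearMap.mul ℝ ℂ) a) w := fun w => by
    have : HasFDerivAt (fun w : ℂ => a * w) ((ContinuousLinearMap.mul ℝ ℂ) a) w :=
      ((ContinuousLinearMap.mul ℝ ℂ) a).hasFDerivAt
    simpa using this.add_const b
  set DR : ℂ →L[ℝ] ℝ := Complex.reCLM.comp ((ContinuousLinearMap.mul ℝ ℂ) a) with hDR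
  set DS : ℂ →L[ℝ] ℝ := Complex.imCLM.comp ((ContinuousLinearMap.mul ℝ ℂ) a) with hDS
  have hR : ∀ w, HasFDerivAt R DR w := fun w =>
    (Complex.reCLM.hasFDerivAt).comp w (hlin w)
  have hS : ∀ w, HasFDerivAt S DS w := fun w =>
    (Complex.imCLM.hasFDerivAt).comp w (hlin w)
  set Du : ℂ → (ℂ →L[ℝ] ℝ) := fun w => (2 * R w) • DR + (2 * S w) • DS with hDu
  have hu : ∀ w, HasFDerivAt u (Du w) w := fun w => by
    have h1 : HasFDerivAt (fun w => R w * R w + S w * S w + c)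
        ((R w • DR + R w • DR) + (S w • DS + S w • DS)) w :=
      (((hR w).mul (hR w)).add ((hS w).mul (hS w))).add_const c
    have h2 : (R w • DR + R w • DR) + (S w • DS + S w • DS) = Du w := by
      simp [hDu, two_smul, two_mul, add_smul]
    have h3 : u = fun w => R w * R w + S w * S w + c := funext huRS
    rw [h3]; rw [← h2]; exact h1
  have hucont : Continuous u := by
    have : Continuous (fun w : ℂ => a * w + b) := by continuity
    exact (Complex.continuous_normSq.comp this).add continuous_const
  have hupos : ∀ᶠ w in 𝓝 z, 0 < u w :=
    hucont.continuousAt.preimage_mem_nhds (Ioi_mem_nhds hz)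
  -- first derivative of f = log ∘ u
  set f' : ℂ → (ℂ →L[ℝ] ℝ) := fun w => (u w)⁻¹ • Du w with hf'def
  have hf' : ∀ᶠ w in 𝓝 z, HasFDerivAt (fun w => Real.log (u w)) (f' w) w := by
    filter_upwards [hupos] with w hw
    exact (hu w).log hw.ne'
  -- the directional derivative functions
  have happ1 : ∀ w, f' w 1 = (2 * R w * a.re + 2 * S w * a.im) * (u w)⁻¹ := fun w => by
    simp [hf'def, hDu, hDR, hDS]; ring
  have happI : ∀ w, f' w Complex.I = (2 * R w * (-a.im) + 2 * S w * a.re) * (u w)⁻¹ := fun w => by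
    simp [hf'def, hDu, hDR, hDS, Complex.mul_I_re, Complex.mul_I_im]; ring
  -- second derivatives
  set v1 : ℂ → ℝ := fun w => 2 * R w * a.re + 2 * S w * a.im with hv1def
  set vI : ℂ → ℝ := fun w => 2 * R w * (-a.im) + 2 * S w * a.re with hvIdef
  have hv1 : HasFDerivAt v1 ((2 * a.re) • DR + (2 * a.im) • DS) z := by
    have := (((hR z).const_mul 2).mul_const a.re).add (((hS z).const_mul 2).mul_const a.im)
    refine this.congr_fderiv ?_
    ext h; simp; ring
  have hvI : HasFDerivAt vI ((2 * (-a.im)) • DR + (2 * a.re) • DS) z := by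
    have := (((hR z).const_mul 2).mul_const (-a.im)).add (((hS z).const_mul 2).mul_const a.re)
    refine this.congr_fderiv ?_
    ext h; simp; ring
  have huinv : HasFDerivAt (fun w => (u w)⁻¹) ((-((u z) ^ 2)⁻¹ : ℝ) • Du z) z := by
    refine ((hasDerivAt_inv (x := u z) hz.ne').comp_hasFDerivAt z (hu z)).congr_fderiv ?_
    ext v; simp
  set L1 : ℂ →L[ℝ] ℝ :=
    (u z)⁻¹ • ((2 * a.re) • DR + (2 * a.im) • DS) + v1 z • ((-((u z) ^ 2)⁻¹ : ℝ) • Du z) with hL1def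
  set LI : ℂ →L[ℝ] ℝ :=
    (u z)⁻¹ • ((2 * (-a.im)) • DR + (2 * a.re) • DS) + vI z • ((-((u z) ^ 2)⁻¹ : ℝ) • Du z) with hLIdef
  have hg1 : HasFDerivAt (fun w => f' w 1) L1 z := by
    have h := hv1.mul huinv
    have e : (fun w => f' w 1) = fun w => v1 w * (u w)⁻¹ := funext happ1
    rw [e, hL1def]
    refine h.congr_fderiv ?_
    ext h'; simp; ring
  have hgI : HasFDerivAt (fun w => f' w Complex.I) LI z := by
    have h := hvI.mul huinv
    have e : (fun w => f' w Complex.I) = fun w => vI w * (u w)⁻¹ := funext happI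
    rw [e, hLIdef]
    refine h.congr_fderiv ?_
    ext h'; simp; ring
  refine ⟨f', hf', L1, LI, hg1, hgI, ?_⟩
  -- final algebra
  have hDR1 : DR 1 = a.re := by simp [hDR]
  have hDS1 : DS 1 = a.im := by simp [hDS]
  have hDRI : DR Complex.I = -a.im := by simp [hDR, Complex.mul_I_re]
  have hDSI : DS Complex.I = a.re := by simp [hDS, Complex.mul_I_im]
  have hune : u z ≠ 0 := hz.ne'
  have hval : u z = R z * R z + S z * S z + c := huRS z
  have hgoal : L1 1 + LI Complex.I =
      4 * Complex.normSq a * c / (u z) ^ 2 := by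
    simp only [hL1def, hLIdef, ContinuousLinearMap.add_apply, ContinuousLinearMap.smul_apply,
      hDu, hDR1, hDS1, hDRI, hDSI, hv1def, hvIdef, smul_eq_mul, Complex.normSq_apply]
    field_simp
    rw [hval]; ring
  exact hgoal

theorem stmt_2 (U : Set ℂ) (hU : IsOpen U) (A : ℂ) (B C : ℝ) (hB : 0 < B)
    (N : ℕ) (hN : 1 ≤ N) (K : Fin N → ℝ) (α β : Fin N → ℂ)
    (hαβ : ∀ j, ∀ z ∈ U, α j * z + β j ≠ 0)
    (φ : ℂ → ℝ)
    (hφ : ∀ z, φ z = (C / B) * Real.log (Complex.normSq (z - A) + B) +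
      ∑ j : Fin N, K j * Real.log (Complex.normSq (α j * z + β j))) :
    ContDiffOn ℝ 2 φ U ∧
      ∀ z ∈ U, (1 / 4) * planeLaplacian φ z = C / (Complex.normSq (z - A) + B) ^ 2 := by
  have hφfun : φ = fun z => (C / B) * Real.log (Complex.normSq (z - A) + B) +
      ∑ j : Fin N, K j * Real.log (Complex.normSq (α j * z + β j)) := funext hφ
  constructor
  · intro z hz
    apply ContDiffAt.contDiffWithinAt
    rw [hφfun]
    have h0 : Complex.normSq (z - A) + B ≠ 0 :=
      (add_pos_of_nonneg_of_pos (Complex.normSq_nonneg _) hB).ne'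
    refine ContDiffAt.add ?_ ?_
    · refine (contDiffAt_const.mul ?_)
      have h := contDiffAt_log_term 1 (-A) B z (by simpa [sub_eq_add_neg] using h0)
      simpa [sub_eq_add_neg] using h
    · refine ContDiffAt.sum fun j _ => contDiffAt_const.mul ?_
      have hp : Complex.normSq (α j * z + β j) + 0 ≠ 0 := by
        simpa using (Complex.normSq_pos.2 (hαβ j z hz)).ne'
      simpa using contDiffAt_log_term (α j) (β j) 0 z hp
  · intro z hz
    have h0 : 0 < Complex.normSq (z - A) + B :=
      add_pos_of_nonneg_of_pos (Complex.normSq_nonneg _) hB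
    have e1 : HasPlaneLapAt (fun w => Real.log (Complex.normSq (w - A) + B))
        (4 * B / (Complex.normSq (z - A) + B) ^ 2) z := by
      have h := key_hasPlaneLapAt 1 (-A) B z (by simpa [sub_eq_add_neg] using h0)
      simpa [sub_eq_add_neg] using h
    have e2 : ∀ j : Fin N, HasPlaneLapAt
        (fun w => Real.log (Complex.normSq (α j * w + β j))) 0 z := fun j => by
      have hp : 0 < Complex.normSq (α j * z + β j) + 0 := by
        simpa using Complex.normSq_pos.2 (hαβ j z hz)
      simpa using key_hasPlaneLapAt (α j) (β j) 0 z hp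
    have total : HasPlaneLapAt φ
        ((C / B) * (4 * B / (Complex.normSq (z - A) + B) ^ 2) + ∑ j : Fin N, K j * 0) z := by
      rw [hφfun]
      exact (e1.const_mul (C / B)).add (HasPlaneLapAt.sum fun j _ => (e2 j).const_mul (K j))
    rw [total.lap_eq]
    field_simp
    simp
end

section
/- Let κ ∈ ℝ, ε > 0, and let w ∈ ℂ with |w| > 1. Then the complex-valued area integral over the open unit disc satisfies ∫_{𝔻} κ/((|p|² + ε)²·(p − w)) dA(p) = −π·κ/(ε(1 + ε)·w). -/
open Complex MeasureTheory Real

lemma circ_key' (w : ℂ) (hw : 1 < ‖w‖) {r : ℝ} (hr : 0 < r) (hr1 : r < 1) :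
    (∮ z in C(0, r), (z * (z - w))⁻¹) = -(2 * Real.pi * I) / w := by
  have hw0 : w ≠ 0 := by
    intro h; rw [h] at hw; simp at hw; linarith
  have h1 : (∮ z in C(0, r), (z - w)⁻¹) = 0 := by
    apply Complex.circleIntegral_eq_zero_of_differentiable_on_off_countable hr.le
      Set.countable_empty
    · apply ContinuousOn.inv₀ (Continuous.continuousOn (by continuity))
      intro z hz
      simp only [Metric.mem_closedBall, dist_zero_right] at hz
      intro h; rw [sub_eq_zero] at h; rw [h] at hz; linarith
    · intro z hz
      simp only [Metric.mem_ball, dist_zero_right, Set.mem_diff] at hz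
      have hne : z - w ≠ 0 := by
        intro h; rw [sub_eq_zero] at h; rw [h] at hz
        have := hz.1; linarith
      exact ((differentiableAt_id.sub (differentiableAt_const w)).inv hne)
  have h2 : (∮ z in C(0, r), z⁻¹) = 2 * Real.pi * I := by
    have := circleIntegral.integral_sub_inv_of_mem_ball
      (c := 0) (w := 0) (R := r) (by simpa using hr)
    simpa using this
  have hint1 : CircleIntegrable (fun z => (z - w)⁻¹) 0 r := by
    rw [circleIntegrable_sub_inv_iff]
    right
    simp only [Metric.mem_sphere, dist_zero_right]
    rw [abs_of_pos hr]; intro h; rw [h] at hw; linarith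
  have hint2 : CircleIntegrable (fun z => z⁻¹) 0 r := by
    have := circleIntegrable_sub_inv_iff (c := (0:ℂ)) (w := 0) (R := r)
    simp only [sub_zero] at this
    rw [this]; right
    simp only [Metric.mem_sphere, dist_zero_right, map_zero, norm_zero]
    rw [abs_of_pos hr]; exact hr.ne
  calc (∮ z in C(0, r), (z * (z - w))⁻¹)
      = ∮ z in C(0, r), w⁻¹ • ((z - w)⁻¹ - z⁻¹) := by
        apply circleIntegral.integral_congr hr.le
        intro z hz
        simp only [Metric.mem_sphere, dist_zero_right] at hz
        have hz0 : z ≠ 0 := by intro h; rw [h] at hz; simp at hz; linarith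
        have hzw : z - w ≠ 0 := by
          intro h; rw [sub_eq_zero] at h
          rw [h] at hz; linarith
        simp only [smul_eq_mul]
        field_simp
        ring
    _ = w⁻¹ * ((∮ z in C(0, r), (z - w)⁻¹) - ∮ z in C(0, r), z⁻¹) := by
        rw [circleIntegral.integral_smul, ← circleIntegral.integral_sub hint1 hint2]
        simp [smul_eq_mul]
    _ = -(2 * Real.pi * I) / w := by
        rw [h1, h2]; field_simp; ring

lemma theta_int' (w : ℂ) (hw : 1 < ‖w‖) {r : ℝ} (hr : 0 < r) (hr1 : r < 1) :
    (∫ θ in Set.Ioo (-Real.pi) Real.pi, (circleMap 0 r θ - w)⁻¹) = -(2 * Real.pi) / w := by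
  have hkey := circ_key' w hw hr hr1
  have hper : Function.Periodic (fun θ : ℝ => (circleMap 0 r θ - w)⁻¹) (2 * Real.pi) := by
    intro θ; simp [periodic_circleMap 0 r θ]
  have h0 : (∫ θ in Set.Ioo (-Real.pi) Real.pi, (circleMap 0 r θ - w)⁻¹)
      = ∫ θ in (0:ℝ)..(2*Real.pi), (circleMap 0 r θ - w)⁻¹ := by
    rw [← MeasureTheory.integral_Ioc_eq_integral_Ioo,
      ← intervalIntegral.integral_of_le (by linarith [Real.pi_pos])]
    have := hper.intervalIntegral_add_eq (-Real.pi) 0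
    simpa [(by ring : -Real.pi + 2*Real.pi = Real.pi)] using this
  rw [h0]
  have hcirc : (∮ z in C(0, r), (z * (z - w))⁻¹)
      = I * ∫ θ in (0:ℝ)..(2*Real.pi), (circleMap 0 r θ - w)⁻¹ := by
    rw [circleIntegral, ← intervalIntegral.integral_const_mul]
    apply intervalIntegral.integral_congr
    intro θ _
    have hz0 : circleMap 0 r θ ≠ 0 := circleMap_ne_center hr.ne'
    have hzw : circleMap 0 r θ - w ≠ 0 := by
      intro h; rw [sub_eq_zero] at h
      have : ‖circleMap 0 r θ‖ = r := by
        simp [norm_circleMap_zero, abs_of_pos hr]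
      rw [h] at this; rw [this] at hw; linarith
    simp only [deriv_circleMap, smul_eq_mul, mul_inv]
    field_simp
  rw [hkey] at hcirc
  rw [← mul_right_inj' I_ne_zero, ← hcirc]
  field_simp

lemma radial_int' (ε : ℝ) (hε : 0 < ε) :
    (∫ r in Set.Ioo (0:ℝ) 1, r / (r^2 + ε)^2) = 1 / (2 * ε * (1 + ε)) := by
  have hpos : ∀ r : ℝ, 0 < r^2 + ε := fun r => by positivity
  rw [← MeasureTheory.integral_Ioc_eq_integral_Ioo,
    ← intervalIntegral.integral_of_le (by norm_num)]
  have hderiv : ∀ r ∈ Set.uIcc (0:ℝ) 1,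
      HasDerivAt (fun x : ℝ => -(1/2) * (x^2 + ε)⁻¹) (r / (r^2 + ε)^2) r := by
    intro r _
    have h1 : HasDerivAt (fun x : ℝ => x^2 + ε) (2*r) r := by
      simpa using (hasDerivAt_pow 2 r).add_const ε
    have h2 := (h1.inv (hpos r).ne').const_mul (-(1/2) : ℝ)
    exact h2.congr_deriv (by ring)
  rw [intervalIntegral.integral_eq_sub_of_hasDerivAt hderiv (by
    apply Continuous.intervalIntegrable
    apply Continuous.div continuous_id (by continuity)
    intro x; exact (pow_ne_zero 2 (hpos x).ne'))]
  have h0 : (0:ℝ)^2 + ε = ε := by ring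
  have h1 : (1:ℝ)^2 + ε = 1 + ε := by ring
  rw [h0, h1]
  have : (1:ℝ) + ε ≠ 0 := by positivity
  field_simp
  ring

theorem stmt_7 (κ ε : ℝ) (hε : 0 < ε) (w : ℂ) (hw : 1 < ‖w‖) :
    (∫ p in Metric.ball (0 : ℂ) 1,
        (κ : ℂ) / ((((Complex.normSq p + ε : ℝ) : ℂ)) ^ 2 * (p - w))) =
      -(Real.pi : ℂ) * (κ : ℂ) / ((ε : ℂ) * (1 + (ε : ℂ)) * w) := by
  have hπ := Real.pi_pos
  have hw0 : w ≠ 0 := by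
    intro h; rw [h] at hw; simp at hw; linarith
  set g : ℂ → ℂ := fun p => (κ : ℂ) / ((((Complex.normSq p + ε : ℝ) : ℂ)) ^ 2 * (p - w)) with hg
  set T : Set (ℝ × ℝ) := Set.Ioo (0:ℝ) 1 ×ˢ Set.Ioo (-Real.pi) Real.pi with hT
  set F : ℝ × ℝ → ℂ := fun p => p.1 • g (Complex.polarCoord.symm p) with hF
  have hsm : ∀ p : ℝ × ℝ, (Complex.polarCoord.symm p : ℂ) = circleMap 0 p.1 p.2 := by
    intro p
    simp only [Complex.polarCoord_symm_apply, circleMap, Complex.exp_mul_I, zero_add,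
      Complex.ofReal_cos, Complex.ofReal_sin]
  have step1 : (∫ p in Metric.ball (0 : ℂ) 1, g p) = ∫ p in T, F p := by
    rw [← integral_indicator measurableSet_ball,
      ← Complex.integral_comp_polarCoord_symm (Set.indicator (Metric.ball 0 1) g)]
    rw [show (∫ p in polarCoord.target,
        p.1 • (Set.indicator (Metric.ball 0 1) g) (Complex.polarCoord.symm p))
        = ∫ p in polarCoord.target, Set.indicator T F p from ?_]
    · rw [setIntegral_indicator (by measurability),
        Set.inter_eq_self_of_subset_right (by
          rw [polarCoord_target, hT]
          rintro ⟨r, θ⟩ ⟨⟨h1, h2⟩, h3⟩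
          exact ⟨h1, h3⟩)]
    · apply setIntegral_congr_fun (polarCoord.open_target.measurableSet)
      intro p hp
      rw [polarCoord_target] at hp
      obtain ⟨hp1, hp2⟩ := hp
      simp only [Set.mem_Ioi] at hp1
      have habs : ‖Complex.polarCoord.symm p‖ = |p.1| :=
        Complex.norm_polarCoord_symm p
      by_cases h : p.1 < 1
      · have hmem : Complex.polarCoord.symm p ∈ Metric.ball (0:ℂ) 1 := by
          rw [Metric.mem_ball, dist_zero_right, habs,
            abs_of_pos hp1]; exact h
        have hmemT : p ∈ T := ⟨⟨hp1, h⟩, hp2⟩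
        simp only [Set.indicator_of_mem hmem, Set.indicator_of_mem hmemT]; rfl
      · have hmem : Complex.polarCoord.symm p ∉ Metric.ball (0:ℂ) 1 := by
          rw [Metric.mem_ball, dist_zero_right, habs,
            abs_of_pos hp1]; exact h
        have hmemT : p ∉ T := by
          intro hc; exact h hc.1.2
        simp only [Set.indicator_of_notMem hmem, Set.indicator_of_notMem hmemT, smul_zero]
  rw [step1]
  -- Integrability of F on T
  have hFcont : ContinuousOn F (Set.Icc (0:ℝ) 1 ×ˢ Set.Icc (-Real.pi) Real.pi) := by
    have hc : Continuous (fun p : ℝ × ℝ => (Complex.polarCoord.symm p : ℂ)) := by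
      simp only [Complex.polarCoord_symm_apply]
      continuity
    apply ContinuousOn.smul (continuous_fst.continuousOn)
    rw [hg]
    apply ContinuousOn.div continuousOn_const
    · apply ContinuousOn.mul
      · apply Continuous.continuousOn
        exact (Complex.continuous_ofReal.comp
          ((Complex.continuous_normSq.comp hc).add continuous_const)).pow 2
      · exact (hc.sub continuous_const).continuousOn
    · intro p hp
      apply mul_ne_zero
      · apply pow_ne_zero
        rw [Ne, Complex.ofReal_eq_zero]
        intro hx
        nlinarith [Complex.normSq_nonneg (Complex.polarCoord.symm p)]
      · intro h
        rw [sub_eq_zero] at h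
        have h1 : ‖Complex.polarCoord.symm p‖ = |p.1| :=
          Complex.norm_polarCoord_symm p
        rw [h] at h1
        have h2 : |p.1| ≤ 1 := abs_le.mpr ⟨by linarith [hp.1.1], hp.1.2⟩
        rw [h1] at hw
        linarith
  have hInt : IntegrableOn F T := by
    apply (hFcont.integrableOn_compact (isCompact_Icc.prod isCompact_Icc)).mono_set
    rw [hT]
    exact Set.prod_mono Set.Ioo_subset_Icc_self Set.Ioo_subset_Icc_self
  rw [Measure.volume_eq_prod] at hInt ⊢
  rw [hT, setIntegral_prod F hInt]
  -- inner integral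
  have step2 : ∀ r ∈ Set.Ioo (0:ℝ) 1,
      (∫ θ in Set.Ioo (-Real.pi) Real.pi, F (r, θ))
        = (↑κ * (-(2 * Real.pi) / w) * ((r / (r^2 + ε)^2 : ℝ) : ℂ)) := by
    intro r hr
    have hθ := theta_int' w hw hr.1 hr.2
    have hpos : (0:ℝ) < r^2 + ε := by positivity
    calc (∫ θ in Set.Ioo (-Real.pi) Real.pi, F (r, θ))
        = ∫ θ in Set.Ioo (-Real.pi) Real.pi,
            (↑r * (↑κ * ((((r^2 + ε : ℝ) : ℂ))^2)⁻¹)) * (circleMap 0 r θ - w)⁻¹ := by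
          apply setIntegral_congr_fun measurableSet_Ioo
          intro θ _
          simp only [hF, hg, hsm, Complex.real_smul]
          have hnormSq : Complex.normSq (circleMap 0 r θ) = r^2 := by
            rw [← Complex.sq_norm, norm_circleMap_zero, _root_.sq_abs]
          rw [hnormSq, div_eq_mul_inv, mul_inv]
          ring
      _ = (↑r * (↑κ * ((((r^2 + ε : ℝ) : ℂ))^2)⁻¹)) * (-(2 * Real.pi) / w) := by
          rw [MeasureTheory.integral_const_mul, hθ]
      _ = (↑κ * (-(2 * Real.pi) / w) * ((r / (r^2 + ε)^2 : ℝ) : ℂ)) := by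
          have hne : (((r^2 + ε : ℝ)) : ℂ) ≠ 0 := by
            rw [Ne, Complex.ofReal_eq_zero]; exact hpos.ne'
          rw [Complex.ofReal_div]
          push_cast
          field_simp
  rw [setIntegral_congr_fun measurableSet_Ioo step2, MeasureTheory.integral_const_mul]
  have hof : (∫ a in Set.Ioo (0:ℝ) 1, ((a / (a^2 + ε)^2 : ℝ) : ℂ))
      = ((∫ a in Set.Ioo (0:ℝ) 1, a / (a^2 + ε)^2 : ℝ) : ℂ) := integral_ofReal
  rw [hof, radial_int' ε hε]
  have h1 : ((1:ℂ) + ε) ≠ 0 := by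
    intro h
    have := congrArg Complex.re h
    push_cast at this
    simp at this
    linarith
  have hε0 : (ε : ℂ) ≠ 0 := by
    rw [Ne, Complex.ofReal_eq_zero]; positivity
  push_cast
  field_simp
end

section
/- Let k ≥ 1 be a real number and let H : ℂ → ℝ be twice continuously differentiable with ΔH = 0 on all of ℂ (H is harmonic). If the function z ↦ |z|^{4k}·(1 + |z|²)^{−2k}·exp(−k·H(z)) is bounded on ℂ, then H is constant. -/
open Complex

set_option maxHeartbeats 1000000

/-- A primitive of an entire function via ray integrals. -/
lemma hasDerivAt_primitive (g : ℂ → ℂ) (hg : Differentiable ℂ g) (z₀ : ℂ) :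
    HasDerivAt (fun z => ∫ t in (0:ℝ)..1, z * g (t * z)) (g z₀) z₀ := by
  have hgc : Continuous g := hg.continuous
  have hgC : ContDiff ℂ 2 g := contDiff_iff_contDiffAt.2 fun x => (hg.analyticAt x).contDiffAt
  have hg'c : Continuous (deriv g) := hgC.continuous_deriv (by norm_num)
  set R : ℝ := ‖z₀‖ + 1 with hR
  obtain ⟨C, hC⟩ := (isCompact_closedBall (0:ℂ) R).exists_bound_of_continuousOn hgc.continuousOn
  obtain ⟨C', hC'⟩ := (isCompact_closedBall (0:ℂ) R).exists_bound_of_continuousOn hg'c.continuousOn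
  have hC0 : 0 ≤ C := le_trans (norm_nonneg _) (hC 0 (by simp [hR]; positivity))
  have hC'0 : 0 ≤ C' := le_trans (norm_nonneg _) (hC' 0 (by simp [hR]; positivity))
  have hR0 : 0 ≤ R := by positivity
  have hmem : ∀ t : ℝ, t ∈ Set.Ioc (0:ℝ) 1 → ∀ x ∈ Metric.ball z₀ 1,
      ((t:ℂ) * x ∈ Metric.closedBall (0:ℂ) R ∧ ‖x‖ ≤ R) := by
    intro t ht x hx
    have hxn : ‖x‖ ≤ R := by
      have := norm_sub_norm_le x z₀
      have hd : ‖x - z₀‖ < 1 := by simpa [dist_eq_norm] using hx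
      simp only [hR]; linarith
    refine ⟨?_, hxn⟩
    simp only [Metric.mem_closedBall, dist_zero_right, norm_mul, Complex.norm_real]
    have htn : ‖t‖ ≤ 1 := by
      rw [Real.norm_eq_abs, abs_of_pos ht.1]; exact ht.2
    calc ‖t‖ * ‖x‖ ≤ 1 * R :=
          mul_le_mul htn hxn (norm_nonneg _) zero_le_one
      _ = R := one_mul R
  have key := intervalIntegral.hasDerivAt_integral_of_dominated_loc_of_deriv_le
    (𝕜 := ℂ) (μ := MeasureTheory.volume) (a := 0) (b := 1) (s := Metric.ball z₀ 1)
    (F := fun x t => x * g ((t:ℂ) * x))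
    (F' := fun x t => g ((t:ℂ) * x) + x * ((t:ℂ) * deriv g ((t:ℂ) * x)))
    (x₀ := z₀) (bound := fun _ => C + R * C')
    (Metric.ball_mem_nhds z₀ one_pos)
    (Filter.Eventually.of_forall fun x =>
      ((continuous_const.mul (hgc.comp (Complex.continuous_ofReal.mul continuous_const))).aestronglyMeasurable))
    ((continuous_const.mul (hgc.comp (Complex.continuous_ofReal.mul continuous_const))).intervalIntegrable 0 1)
    (((hgc.comp (Complex.continuous_ofReal.mul continuous_const)).add (continuous_const.mul
      (continuous_ofReal.mul (hg'c.comp (Complex.continuous_ofReal.mul continuous_const))))).aestronglyMeasurable)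
    (Filter.Eventually.of_forall fun t => by
      intro ht x hx
      rw [Set.uIoc_of_le zero_le_one] at ht
      obtain ⟨hmem1, hxn⟩ := hmem t ht x hx
      have h1 : ‖g ((t:ℂ) * x)‖ ≤ C := hC _ hmem1
      have h2 : ‖deriv g ((t:ℂ) * x)‖ ≤ C' := hC' _ hmem1
      have h3 : ‖(t:ℂ)‖ ≤ 1 := by
        rw [Complex.norm_real, Real.norm_eq_abs, abs_of_pos ht.1]; exact ht.2
      calc ‖g ((t:ℂ) * x) + x * ((t:ℂ) * deriv g ((t:ℂ) * x))‖
          ≤ ‖g ((t:ℂ) * x)‖ + ‖x‖ * (‖(t:ℂ)‖ * ‖deriv g ((t:ℂ) * x)‖) := by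
            refine le_trans (norm_add_le _ _) ?_
            simp [norm_mul]
        _ ≤ C + R * (1 * C') := by
            gcongr
        _ = C + R * C' := by ring)
    (intervalIntegrable_const)
    (Filter.Eventually.of_forall fun t => by
      intro ht x hx
      have hinner : HasDerivAt (fun x : ℂ => (t:ℂ) * x) (t:ℂ) x := by
        simpa using (hasDerivAt_id x).const_mul (t:ℂ)
      have hgcomp : HasDerivAt (fun x : ℂ => g ((t:ℂ) * x))
          (deriv g ((t:ℂ) * x) * (t:ℂ)) x :=
        (hg ((t:ℂ) * x)).hasDerivAt.comp x hinner
      have h := (hasDerivAt_id x).mul hgcomp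
      simp only [Pi.mul_def, id_eq, one_mul] at h
      exact h.congr_deriv (by ring))
  have hval : (∫ t in (0:ℝ)..1, (g ((t:ℂ) * z₀) + z₀ * ((t:ℂ) * deriv g ((t:ℂ) * z₀)))) = g z₀ := by
    have hψ : ∀ t ∈ Set.uIcc (0:ℝ) 1, HasDerivAt (fun t : ℝ => (t:ℂ) * g ((t:ℂ) * z₀))
        (g ((t:ℂ) * z₀) + z₀ * ((t:ℂ) * deriv g ((t:ℂ) * z₀))) t := by
      intro t _
      have hinner : HasDerivAt (fun w : ℂ => w * z₀) z₀ (t:ℂ) := by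
        simpa using (hasDerivAt_id (t:ℂ)).mul_const z₀
      have hgcomp : HasDerivAt (fun w : ℂ => g (w * z₀))
          (deriv g ((t:ℂ) * z₀) * z₀) (t:ℂ) :=
        (hg ((t:ℂ) * z₀)).hasDerivAt.comp (t:ℂ) hinner
      have hΦ := (hasDerivAt_id (t:ℂ)).mul hgcomp
      have h := hΦ.comp_ofReal (z := t)
      simp only [Pi.mul_apply, id_eq, one_mul] at h
      convert h using 1
      ring
    have hint : IntervalIntegrable
        (fun t : ℝ => g ((t:ℂ) * z₀) + z₀ * ((t:ℂ) * deriv g ((t:ℂ) * z₀)))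
        MeasureTheory.volume 0 1 :=
      (((hgc.comp (Complex.continuous_ofReal.mul continuous_const)).add (continuous_const.mul
        (continuous_ofReal.mul (hg'c.comp (Complex.continuous_ofReal.mul continuous_const)))))).intervalIntegrable 0 1
    rw [intervalIntegral.integral_eq_sub_of_hasDerivAt hψ hint]
    simp
  have := key.2
  rwa [hval] at this

lemma gradient_field_entire (H : ℂ → ℝ) (hH : ContDiff ℝ 2 H)
    (hharm : ∀ z, planeLaplacian H z = 0) :
    ∀ z₀, ∃ c, HasDerivAt
      (fun z => ((fderiv ℝ H z 1 : ℝ) : ℂ) - ((fderiv ℝ H z I : ℝ) : ℂ) * I) c z₀ := by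
  intro z₀
  set u : ℂ → ℂ →L[ℝ] ℝ := fderiv ℝ H with hu
  have hu1 : ContDiff ℝ 1 u := hH.fderiv_right (by norm_num)
  have huD : DifferentiableAt ℝ u z₀ := (hu1.differentiable (by norm_num)) z₀
  set A : ℂ →L[ℝ] ℂ →L[ℝ] ℝ := fderiv ℝ u z₀ with hA
  -- derivative of z ↦ u z v
  have key : ∀ v : ℂ, HasFDerivAt (fun z => u z v)
      ((ContinuousLinearMap.apply ℝ ℝ v).comp A) z₀ :=
    fun v => (ContinuousLinearMap.apply ℝ ℝ v).hasFDerivAt.comp z₀ huD.hasFDerivAt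
  -- real Fréchet derivative of g
  have h1 : HasFDerivAt (fun z => ((u z 1 : ℝ) : ℂ))
      (Complex.ofRealCLM.comp ((ContinuousLinearMap.apply ℝ ℝ (1:ℂ)).comp A)) z₀ :=
    Complex.ofRealCLM.hasFDerivAt.comp z₀ (key 1)
  have h2 : HasFDerivAt (fun z => ((u z I : ℝ) : ℂ))
      (Complex.ofRealCLM.comp ((ContinuousLinearMap.apply ℝ ℝ I).comp A)) z₀ :=
    Complex.ofRealCLM.hasFDerivAt.comp z₀ (key I)
  have h3 := h1.sub (h2.mul_const I)
  set L : ℂ →L[ℝ] ℂ :=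
    Complex.ofRealCLM.comp ((ContinuousLinearMap.apply ℝ ℝ (1:ℂ)).comp A) -
      I • (Complex.ofRealCLM.comp ((ContinuousLinearMap.apply ℝ ℝ I).comp A)) with hL
  have hLapp : ∀ w, L w = ((A w 1 : ℝ) : ℂ) - ((A w I : ℝ) : ℂ) * I := by
    intro w
    simp [hL, ContinuousLinearMap.smul_apply, ContinuousLinearMap.comp_apply,
      ContinuousLinearMap.apply_apply, smul_eq_mul]
    ring
  -- harmonicity : A 1 1 + A I I = 0
  have hharm' : A 1 1 + A I I = 0 := by
    have h := hharm z₀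
    unfold planeLaplacian at h
    have e1 : fderiv ℝ (fun w => fderiv ℝ H w 1) z₀ = (ContinuousLinearMap.apply ℝ ℝ (1:ℂ)).comp A :=
      (key 1).fderiv
    have e2 : fderiv ℝ (fun w => fderiv ℝ H w I) z₀ = (ContinuousLinearMap.apply ℝ ℝ I).comp A :=
      (key I).fderiv
    rw [e1, e2] at h
    simpa using h
  -- symmetry : A I 1 = A 1 I
  have hsym : A I 1 = A 1 I :=
    (hH.contDiffAt.isSymmSndFDerivAt (by norm_num)).eq I 1
  -- Cauchy-Riemann: L I = I * L 1
  have hCR : L I = I * L 1 := by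
    rw [hLapp, hLapp]
    have : (A I I : ℝ) = -(A 1 1) := by linarith
    rw [hsym, this]
    push_cast
    apply Complex.ext <;> simp
  refine ⟨L 1, ?_⟩
  rw [hasDerivAt_iff_hasFDerivAt]
  apply hasFDerivAt_of_restrictScalars ℝ h3
  ext w
  have hw : (w : ℂ) = w.re • (1:ℂ) + w.im • I := by
    simp [Complex.real_smul, Complex.re_add_im]
  simp only [ContinuousLinearMap.coe_restrictScalars', ContinuousLinearMap.smulRight_apply,
    ContinuousLinearMap.one_apply, ContinuousLinearMap.toSpanSingleton_apply, smul_eq_mul]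
  have hLw : L w = ((w.re : ℂ) + (w.im : ℂ) * I) * L 1 := by
    have hdec : L w = w.re • L 1 + w.im • L I := by
      conv_lhs => rw [hw]
      rw [map_add, map_smul, map_smul]
    rw [hdec, hCR, Complex.real_smul, Complex.real_smul]
    ring
  rw [hLw, Complex.re_add_im]

lemma clm_ext_basis {E : Type*} [NormedAddCommGroup E] [NormedSpace ℝ E]
    (T S : ℂ →L[ℝ] E) (h1 : T 1 = S 1) (hI : T I = S I) : T = S := by
  ext w
  have hw : w = w.re • (1:ℂ) + w.im • I := by
    apply Complex.ext <;> simp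
  conv_lhs => rw [hw]
  conv_rhs => rw [hw]
  rw [map_add, map_add, map_smul, map_smul, map_smul, map_smul, h1, hI]

theorem stmt_9 (k : ℝ) (hk : 1 ≤ k) (H : ℂ → ℝ)
    (hH : ContDiff ℝ 2 H) (hharm : ∀ z, planeLaplacian H z = 0)
    (hbdd : ∃ M : ℝ, ∀ z : ℂ,
      ‖z‖ ^ (4 * k) * (1 + Complex.normSq z) ^ (-(2 * k)) *
        Real.exp (-k * H z) ≤ M) :
    ∀ z w : ℂ, H z = H w := by
  obtain ⟨M, hM⟩ := hbdd
  have hk0 : (0:ℝ) < k := lt_of_lt_of_le one_pos hk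
  set g : ℂ → ℂ :=
    fun z => ((fderiv ℝ H z 1 : ℝ) : ℂ) - ((fderiv ℝ H z I : ℝ) : ℂ) * I with hgdef
  have hgD : Differentiable ℂ g := fun z₀ => by
    obtain ⟨c, hc⟩ := gradient_field_entire H hH hharm z₀
    exact hc.differentiableAt
  set F : ℂ → ℂ := fun z => ∫ t in (0:ℝ)..1, z * g ((t:ℂ) * z) with hFdef
  have hFD : ∀ z, HasDerivAt F (g z) z := fun z => hasDerivAt_primitive g hgD z
  have hFdiff : Differentiable ℂ F := fun z => (hFD z).differentiableAt
  have hHdiff : Differentiable ℝ H := hH.differentiable (by norm_num)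
  have hReF : ∀ z, HasFDerivAt (fun w => (F w).re)
      (Complex.reCLM.comp
        (((1 : ℂ →L[ℂ] ℂ).smulRight (g z)).restrictScalars ℝ)) z := fun z =>
    Complex.reCLM.hasFDerivAt.comp z
      ((hasDerivAt_iff_hasFDerivAt.1 (hFD z)).restrictScalars ℝ)
  have hsub : ∀ z w, H z - (F z).re = H w - (F w).re := by
    apply is_const_of_fderiv_eq_zero (𝕜 := ℝ)
    · exact hHdiff.sub fun z => (hReF z).differentiableAt
    · intro z
      rw [HasFDerivAt.fderiv (f := fun x => H x - (F x).re) ((hHdiff z).hasFDerivAt.sub (hReF z))]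
      apply clm_ext_basis
      · simp only [ContinuousLinearMap.sub_apply, ContinuousLinearMap.comp_apply,
          ContinuousLinearMap.coe_restrictScalars', ContinuousLinearMap.smulRight_apply,
          ContinuousLinearMap.one_apply, ContinuousLinearMap.zero_apply, smul_eq_mul,
          Complex.reCLM_apply, one_mul, hgdef]
        simp [Complex.sub_re, Complex.mul_re]
      · simp only [ContinuousLinearMap.sub_apply, ContinuousLinearMap.comp_apply,
          ContinuousLinearMap.coe_restrictScalars', ContinuousLinearMap.smulRight_apply,
          ContinuousLinearMap.one_apply, ContinuousLinearMap.zero_apply, smul_eq_mul,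
          Complex.reCLM_apply, hgdef]
        simp [Complex.sub_re, Complex.mul_re]
  set c : ℝ := H 0 - (F 0).re with hc
  have hFre : ∀ z, (F z).re = H z - c := fun z => by
    have := hsub z 0
    rw [hc]; linarith
  -- bound on exp(-k H)
  have hBex : ∃ B, ∀ z, Real.exp (-k * H z) ≤ B := by
    obtain ⟨B₂, hB₂⟩ := (isCompact_closedBall (0:ℂ) 1).exists_bound_of_continuousOn
      (f := fun z => Real.exp (-k * H z))
      ((Real.continuous_exp.comp (continuous_const.mul hH.continuous)).continuousOn)
    refine ⟨max (M * 2 ^ (2*k)) B₂, fun z => ?_⟩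
    by_cases hz : ‖z‖ ≤ 1
    · refine le_trans ?_ (le_max_right _ _)
      have := hB₂ z (by simpa [Metric.mem_closedBall, Complex.dist_eq] using hz)
      rwa [Real.norm_eq_abs, abs_of_pos (Real.exp_pos _)] at this
    · push_neg at hz
      refine le_trans ?_ (le_max_left _ _)
      set s : ℝ := Complex.normSq z with hs
      have hs1 : 1 ≤ s := by
        have : 1 * 1 ≤ ‖z‖ * ‖z‖ :=
          mul_le_mul hz.le hz.le zero_le_one (norm_nonneg z)
        simpa [hs, Complex.sq_norm, ← Complex.normSq_eq_norm_sq, sq] using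
          (by nlinarith [Complex.sq_norm z, hz] : (1:ℝ) ≤ Complex.normSq z)
      have hs0 : (0:ℝ) < s := lt_of_lt_of_le one_pos hs1
      have habs : ‖z‖ ^ (4*k) = s ^ (2*k) := by
        rw [show (4*k) = (2:ℝ) * (2*k) by ring, Real.rpow_mul (norm_nonneg z),
          Real.rpow_two, Complex.sq_norm]
      have hP : ‖z‖ ^ (4*k) * (1 + s) ^ (-(2*k)) = (s / (1+s)) ^ (2*k) := by
        rw [habs, Real.rpow_neg (by positivity), Real.div_rpow hs0.le (by positivity)]
        ring
      have hPge : (2:ℝ) ^ (-(2*k)) ≤ (s / (1+s)) ^ (2*k) := by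
        rw [show ((2:ℝ) ^ (-(2*k)) = ((2:ℝ)⁻¹) ^ (2*k)) by
          rw [Real.rpow_neg (by norm_num), ← Real.inv_rpow (by norm_num)]]
        apply Real.rpow_le_rpow (by norm_num)
        · rw [inv_le_iff_one_le_mul₀ (by positivity), div_mul_eq_mul_div,
            le_div_iff₀ (by positivity)]
          linarith
        · positivity
      have hMz := hM z
      rw [hP] at hMz
      have hPpos : (0:ℝ) < (s / (1+s)) ^ (2*k) := by positivity
      have hM0 : 0 ≤ M := le_trans (by positivity) hMz
      calc Real.exp (-k * H z)
          = ((s / (1+s)) ^ (2*k) * Real.exp (-k * H z)) / ((s / (1+s)) ^ (2*k)) := by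
            field_simp
        _ ≤ M / ((s / (1+s)) ^ (2*k)) := by
            gcongr
        _ ≤ M / ((2:ℝ) ^ (-(2*k))) := by
            apply div_le_div_of_nonneg_left hM0 (by positivity) hPge
        _ = M * 2 ^ (2*k) := by
            rw [Real.rpow_neg (by norm_num), div_eq_mul_inv, inv_inv]
  obtain ⟨B, hB⟩ := hBex
  set φ : ℂ → ℂ := fun z => Complex.exp (-(k:ℂ) * F z) with hφ
  have hφD : Differentiable ℂ φ :=
    Complex.differentiable_exp.comp ((differentiable_const _).mul hFdiff)
  have hφnorm : ∀ z, ‖φ z‖ = Real.exp (-k * H z) * Real.exp (k * c) := by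
    intro z
    rw [hφ]
    simp only [Complex.norm_exp]
    rw [show (-(k:ℂ) * F z).re = -k * (F z).re by simp,
      hFre z, ← Real.exp_add]
    ring_nf
  have hφb : Bornology.IsBounded (Set.range φ) := by
    rw [Metric.isBounded_iff_subset_closedBall 0]
    refine ⟨B * Real.exp (k * c), ?_⟩
    rintro _ ⟨z, rfl⟩
    simp only [Metric.mem_closedBall, dist_zero_right]
    rw [hφnorm z]
    exact mul_le_mul_of_nonneg_right (hB z) (Real.exp_pos _).le
  intro z w
  have heq := hφD.apply_eq_apply_of_bounded hφb z w
  have hn := congrArg norm heq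
  rw [hφnorm z, hφnorm w] at hn
  have h2 : Real.exp (-k * H z) = Real.exp (-k * H w) :=
    mul_right_cancel₀ (Real.exp_pos _).ne' hn
  have := Real.exp_injective h2
  have hkne : k ≠ 0 := hk0.ne'
  field_simp at this
  linarith
end
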